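/- arXiv:2401.09400 — 2 statements merged into one kernel-verified Lean document; each statement's English description precedes it below -/
import Mathlib

section
/- For a cosimplicial vector space A (a functor from the simplex category to vector spaces), the matching map s : A^n → M^n A into the n-th matching object (the limit over surjections [n] ↠ [k] with k = n-1 or n-2) is surjective for every n. -/
open CategoryTheory Simplicial

section MatchingAux

open SimplexCategory

lemma SimplexAux.surj_σ {p : ℕ} (i : Fin (p + 1)) :
    Function.Surjective (SimplexCategory.σ i).toOrderHom :=
  epi_iff_surjective.mp inferInstance

lemma SimplexAux.surj_comp {a b c : SimplexCategory} {f : a ⟶ b} {g : b ⟶ c}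
    (hf : Function.Surjective f.toOrderHom) (hg : Function.Surjective g.toOrderHom) :
    Function.Surjective (f ≫ g).toOrderHom := by
  rw [comp_toOrderHom]; exact hg.comp hf

lemma SimplexAux.app_eq (A : CosimplicialObject (ModuleCat ℝ)) {a b : SimplexCategory}
    {f g : a ⟶ b} (h : f = g) (w : A.obj a) : A.map f w = A.map g w := by rw [h]

lemma SimplexAux.app_comp (A : CosimplicialObject (ModuleCat ℝ)) {a b c : SimplexCategory}
    (f : a ⟶ b) (g : b ⟶ c) (w : A.obj a) : A.map (f ≫ g) w = A.map g (A.map f w) := by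
  rw [A.map_comp]; rfl

end MatchingAux

/-!
STATEMENT 0: For a cosimplicial vector space `A` (a functor from the simplex category
to real vector spaces), the matching map `s : Aⁿ → MⁿA` into the `n`-th matching object
— the limit over surjections `⦋n⦌ ↠ ⦋k⦌` with `k = n−1` or `k = n−2` — is surjective
for every `n`.

The matching object is the limit over the category of non-identity surjections under
`⦋n⦌` with target `[n−1]` or `[n−2]`; an element of it is a *matching family*: a
compatible family `x σ ∈ A⦋k⦌` indexed by surjections `σ : ⦋n⦌ ↠ ⦋k⦌` (`k < n`,
`k = n−1` or `n−2`), compatibility meaning `x (σ ≫ τ) = A(τ)(x σ)` for every further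
surjection `τ : ⦋k⦌ ↠ ⦋l⦌` in the indexing category.  Surjectivity of the matching
map says: every matching family is of the form `σ ↦ A(σ)(y)` for some `y ∈ A⦋n⦌`. -/
theorem cosimplicial_vector_space_matching_map_surjective
    (A : CosimplicialObject (ModuleCat ℝ)) (n : ℕ)
    (x : ∀ (k : ℕ), k < n → (k = n - 1 ∨ k = n - 2) →
      ∀ (σ : (⦋n⦌ : SimplexCategory) ⟶ ⦋k⦌), Function.Surjective σ.toOrderHom → A.obj ⦋k⦌)
    (compat : ∀ (k l : ℕ) (hk : k < n) (hk' : k = n - 1 ∨ k = n - 2)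
      (hl : l < n) (hl' : l = n - 1 ∨ l = n - 2)
      (σ : (⦋n⦌ : SimplexCategory) ⟶ ⦋k⦌) (hσ : Function.Surjective σ.toOrderHom)
      (τ : (⦋k⦌ : SimplexCategory) ⟶ ⦋l⦌) (hτ : Function.Surjective τ.toOrderHom)
      (hστ : Function.Surjective (σ ≫ τ).toOrderHom),
      x l hl hl' (σ ≫ τ) hστ = A.map τ (x k hk hk' σ hσ)) :
    ∃ y : A.obj ⦋n⦌, ∀ (k : ℕ) (hk : k < n) (hk' : k = n - 1 ∨ k = n - 2)
      (σ : (⦋n⦌ : SimplexCategory) ⟶ ⦋k⦌) (hσ : Function.Surjective σ.toOrderHom),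
      x k hk hk' σ hσ = A.map σ y := by
  open SimplexCategory SimplexAux in
  have xeq : ∀ (k : ℕ) (hk : k < n) (hk' : k = n - 1 ∨ k = n - 2)
      (σ₁ σ₂ : (⦋n⦌ : SimplexCategory) ⟶ ⦋k⦌) (h : σ₁ = σ₂)
      (h₁ : Function.Surjective σ₁.toOrderHom) (h₂ : Function.Surjective σ₂.toOrderHom),
      x k hk hk' σ₁ h₁ = x k hk hk' σ₂ h₂ := by
    intro k hk hk' σ₁ σ₂ h h₁ h₂; subst h; rfl
  obtain _ | _ | m := n
  · exact ⟨0, fun k hk _ _ _ => absurd hk (Nat.not_lt_zero k)⟩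
  · -- n = 1
    open SimplexCategory SimplexAux in
    refine ⟨A.map (δ (0 : Fin 2)) (x 0 (by omega) (Or.inl rfl) (σ (0 : Fin 1))
      (SimplexAux.surj_σ _)), ?_⟩
    intro k hk hk' θ hθ
    obtain rfl : k = 0 := by omega
    haveI : Epi θ := SimplexCategory.epi_iff_surjective.mpr hθ
    obtain ⟨i, rfl⟩ := SimplexCategory.eq_σ_of_epi θ
    obtain rfl : i = 0 := Fin.ext (by omega)
    calc x 0 hk hk' (σ (0 : Fin 1)) hθ
        = A.map (𝟙 _) (x 0 hk hk' (σ (0 : Fin 1)) hθ) := by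
          rw [A.map_id]; rfl
      _ = A.map (δ (0 : Fin 2) ≫ σ (0 : Fin 1)) (x 0 hk hk' (σ (0 : Fin 1)) hθ) :=
          (SimplexAux.app_eq A (SimplexCategory.δ_comp_σ_self' (by decide)) _).symm
      _ = A.map (σ (0 : Fin 1)) (A.map (δ (0 : Fin 2))
            (x 0 hk hk' (σ (0 : Fin 1)) hθ)) := SimplexAux.app_comp A _ _ _
  -- n = m + 2
  open SimplexCategory SimplexAux in
  have ha1 : m + 1 < m + 1 + 1 := by omega
  have ha2 : m + 1 = m + 1 + 1 - 1 ∨ m + 1 = m + 1 + 1 - 2 := Or.inl rfl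
  have hb2 : m = m + 1 + 1 - 1 ∨ m = m + 1 + 1 - 2 := Or.inr rfl
  open SimplexCategory SimplexAux in
  obtain ⟨a, hadef⟩ : ∃ a : Fin (m + 2) → A.obj ⦋m + 1⦌,
      ∀ i, a i = x (m + 1) ha1 ha2 (σ i) (surj_σ i) := ⟨_, fun _ => rfl⟩
  open SimplexCategory SimplexAux in
  -- key compatibility: s^p (a q.succ) = s^q (a p.castSucc) for p ≤ q
  have key : ∀ (p q : Fin (m + 1)), p ≤ q →
      A.map (σ p) (a q.succ) = A.map (σ q) (a p.castSucc) := by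
    intro p q hpq
    rw [hadef, hadef]
    calc A.map (σ p) (x (m + 1) ha1 ha2 (σ q.succ) (surj_σ q.succ))
        = x m (by omega) hb2 (σ q.succ ≫ σ p) (surj_comp (surj_σ _) (surj_σ _)) :=
          (compat (m + 1) m ha1 ha2 (by omega) hb2 (σ q.succ) (surj_σ _) (σ p) (surj_σ _)
            (surj_comp (surj_σ _) (surj_σ _))).symm
      _ = x m (by omega) hb2 (σ p.castSucc ≫ σ q) (surj_comp (surj_σ _) (surj_σ _)) :=
          xeq m (by omega) hb2 _ _ (σ_comp_σ hpq).symm _ _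
      _ = A.map (σ q) (x (m + 1) ha1 ha2 (σ p.castSucc) (surj_σ p.castSucc)) :=
          compat (m + 1) m ha1 ha2 (by omega) hb2 (σ p.castSucc) (surj_σ _) (σ q) (surj_σ _)
            (surj_comp (surj_σ _) (surj_σ _))
  open SimplexCategory SimplexAux in
  have main : ∀ j : Fin (m + 3), ∃ y : A.obj ⦋m + 1 + 1⦌,
      ∀ i : Fin (m + 2), i.castSucc < j → A.map (σ i) y = a i := by
    intro j
    induction j using Fin.induction with
    | zero => exact ⟨0, fun i hi => absurd hi (by simp)⟩
    | succ t IH =>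
      obtain ⟨y, hy⟩ := IH
      refine ⟨y + A.map (δ t.succ) (a t - A.map (σ t) y), ?_⟩
      intro i hi
      rw [map_add]
      rcases eq_or_lt_of_le (Fin.castSucc_lt_succ_iff.mp hi) with heq | hlt
      · subst heq
        have happ : A.map (σ i) (A.map (δ i.succ) (a i - A.map (σ i) y))
            = a i - A.map (σ i) y := by
          calc A.map (σ i) (A.map (δ i.succ) (a i - A.map (σ i) y))
              = A.map (δ i.succ ≫ σ i) (a i - A.map (σ i) y) := (app_comp A _ _ _).symm
            _ = A.map (𝟙 _) (a i - A.map (σ i) y) := app_eq A δ_comp_σ_succ _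
            _ = a i - A.map (σ i) y := by rw [A.map_id]; rfl
        rw [happ]; abel
      · -- i < t
        have h1 : A.map (σ i) y = a i := hy i (Fin.castSucc_lt_castSucc_iff.mpr hlt)
        have hilast : i ≠ Fin.last (m + 1) := by
          intro h
          exact absurd (h ▸ hlt) (Fin.not_lt.mpr (Fin.le_last t))
        set j' := i.castPred hilast with hj'
        have hji : j'.castSucc = i := Fin.castSucc_castPred i hilast
        have ht0 : t ≠ 0 := by
          intro h; subst h
          exact absurd hlt (Fin.not_lt.mpr (Fin.zero_le i))
        have hrel : δ t.succ ≫ σ i = σ j' ≫ δ t := by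
          have h := δ_comp_σ_of_gt (i := t) (j := j') (by rw [hji]; exact hlt)
          rwa [hji] at h
        have hle : j' ≤ t.pred ht0 := by
          rw [Fin.le_def, Fin.coe_pred]
          have h2 := Fin.lt_def.mp hlt
          simp only [hj', Fin.coe_castPred]
          omega
        have h2 : A.map (σ j') (a t) = A.map (σ (t.pred ht0)) (a i) := by
          have h := key j' (t.pred ht0) hle
          rwa [Fin.succ_pred, hji] at h
        have h3 : A.map (σ j') (A.map (σ t) y) = A.map (σ (t.pred ht0)) (a i) := by
          have hσσ : σ j'.castSucc ≫ σ (t.pred ht0) = σ t ≫ σ j' := by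
            have h := σ_comp_σ (i := j') (j := t.pred ht0) hle
            rwa [Fin.succ_pred] at h
          calc A.map (σ j') (A.map (σ t) y)
              = A.map (σ t ≫ σ j') y := (app_comp A _ _ _).symm
            _ = A.map (σ j'.castSucc ≫ σ (t.pred ht0)) y := (app_eq A hσσ _).symm
            _ = A.map (σ (t.pred ht0)) (A.map (σ j'.castSucc) y) := app_comp A _ _ _
            _ = A.map (σ (t.pred ht0)) (a i) := by rw [hji, h1]
        have hz : A.map (σ j') (a t - A.map (σ t) y) = 0 := by
          rw [map_sub, h2, h3, sub_self]
        have h4 : A.map (σ i) (A.map (δ t.succ) (a t - A.map (σ t) y)) = 0 := by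
          rw [← app_comp A, app_eq A hrel, app_comp A, hz, map_zero]
        rw [h1, h4, add_zero]
  open SimplexCategory SimplexAux in
  obtain ⟨y, hy⟩ := main (Fin.last (m + 2))
  refine ⟨y, ?_⟩
  intro k hk hk' θ hθ
  have hax : ∀ i : Fin (m + 2), A.map (σ i) y = a i := fun i => hy i (Fin.castSucc_lt_last i)
  obtain hk1 | hk1 : k = m + 1 ∨ k = m := by omega
  · subst hk1
    haveI : Epi θ := epi_iff_surjective.mpr hθ
    obtain ⟨i, rfl⟩ := eq_σ_of_epi θ
    exact ((hax i).trans (hadef i)).symm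
  · subst hk1
    have hni : ¬ Function.Injective θ.toOrderHom := by
      intro hinj
      have hcard := Fintype.card_le_of_injective _ hinj
      simp only [len_mk, Fintype.card_fin] at hcard
      omega
    obtain ⟨i, θ', hfac⟩ := eq_σ_comp_of_not_injective θ hni
    have hθc : Function.Surjective (σ i ≫ θ').toOrderHom := hfac ▸ hθ
    have hθ' : Function.Surjective θ'.toOrderHom := by
      rw [comp_toOrderHom] at hθc
      have h : Function.Surjective (⇑θ'.toOrderHom ∘ ⇑(σ i).toOrderHom) := hθc
      exact h.of_comp
    have hθc' : Function.Surjective (σ i ≫ θ').toOrderHom := hfac ▸ hθ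
    haveI : Epi θ' := epi_iff_surjective.mpr hθ'
    obtain ⟨jj, rfl⟩ := eq_σ_of_epi θ'
    calc x k hk hk' θ hθ
        = x k hk hk' (σ i ≫ σ jj) hθc' := xeq k hk hk' θ _ hfac hθ hθc'
      _ = A.map (σ jj) (x (k + 1) ha1 ha2 (σ i) (surj_σ i)) :=
          compat (k + 1) k ha1 ha2 hk hk' (σ i) (surj_σ i) (σ jj) (surj_σ jj) hθc'
      _ = A.map (σ jj) (a i) := by rw [← hadef i]
      _ = A.map (σ jj) (A.map (σ i) y) := by rw [hax i]
      _ = A.map (σ i ≫ σ jj) y := (app_comp A _ _ y).symm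
      _ = A.map θ y := (app_eq A hfac y).symm
end

section
/- Every cosimplicial chain complex (of non-negatively graded chain complexes of real vector spaces) is Reedy fibrant with respect to the projective model structure on chain complexes, i.e. for every n the matching map C^n → M^n C is a degreewise surjection in positive degrees. -/
open CategoryTheory Simplicial

/-!
STATEMENT 1: Every cosimplicial chain complex (of non-negatively graded chain
complexes of real vector spaces) is Reedy fibrant with respect to the projective
model structure on chain complexes, i.e. for every `n` the matching map
`Cⁿ → MⁿC` is a degreewise surjection in positive degrees.

Matching objects of chain complexes are computed degreewise, so the statement is:
for every `n`, every positive degree `q`, and every matching family in degree `q`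
— a compatible family `x σ ∈ (C[k])_q` indexed by the surjections `σ : [n] ↠ [k]`
with `k < n` and `k = n−1` or `n−2` — there is `y ∈ (Cⁿ)_q` with
`x σ = C(σ)_q (y)` for all `σ`. -/

private lemma ccrf_mapmap (C : CosimplicialObject (ChainComplex (ModuleCat ℝ) ℕ)) (q : ℕ)
    {a b c : SimplexCategory} (f : a ⟶ b) (g : b ⟶ c) (z : (C.obj a).X q) :
    (C.map g).f q ((C.map f).f q z) = (C.map (f ≫ g)).f q z := by
  rw [C.map_comp]; rfl

private noncomputable def ccrfY (C : CosimplicialObject (ChainComplex (ModuleCat ℝ) ℕ)) (q m : ℕ)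
    (x' : Fin (m+2) → ((C.obj ⦋m+1⦌).X q)) : ℕ → ((C.obj ⦋m+2⦌).X q) := fun r => match r with
  | 0 => 0
  | r+1 =>
    if h : r < m+2 then
      ccrfY C q m x' r + (C.map (SimplexCategory.δ ⟨r+1, by omega⟩)).f q
        (x' ⟨r, h⟩ - (C.map (SimplexCategory.σ ⟨r, h⟩)).f q (ccrfY C q m x' r))
    else ccrfY C q m x' r

private lemma ccrfY_spec (C : CosimplicialObject (ChainComplex (ModuleCat ℝ) ℕ)) (q m : ℕ)
    (x' : Fin (m+2) → ((C.obj ⦋m+1⦌).X q))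
    (hx' : ∀ (i r : ℕ) (_ : i < r) (hr : r < m+2) (hi1 : i < m+1) (hr1 : r-1 < m+1)
      (him : i < m+2),
      (C.map (SimplexCategory.σ (⟨i, hi1⟩ : Fin (m+1)))).f q (x' ⟨r, hr⟩) =
      (C.map (SimplexCategory.σ (⟨r-1, hr1⟩ : Fin (m+1)))).f q (x' ⟨i, him⟩)) :
    ∀ (r : ℕ), r ≤ m+2 → ∀ (i : ℕ) (_ : i < r) (him : i < m+2),
      (C.map (SimplexCategory.σ (⟨i, him⟩ : Fin (m+2)))).f q (ccrfY C q m x' r) = x' ⟨i, him⟩ := by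
  intro r
  induction r with
  | zero => intro _ i hir _; exact absurd hir (by omega)
  | succ r ih =>
    intro hr i hir him
    have hrm : r < m+2 := by omega
    simp only [ccrfY, dif_pos hrm, map_add]
    rcases eq_or_lt_of_le (Nat.lt_succ_iff.mp hir) with rfl | hir2
    · -- i = r case
      rw [ccrf_mapmap]
      have hid : SimplexCategory.δ (⟨i+1, by omega⟩ : Fin (m+3)) ≫
          SimplexCategory.σ (⟨i, him⟩ : Fin (m+2)) = 𝟙 _ :=
        SimplexCategory.δ_comp_σ_succ' (Fin.ext rfl)
      rw [hid, C.map_id, HomologicalComplex.id_f]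
      simp
    · -- i < r case
      have hi1 : i < m+1 := by omega
      have hr1 : r-1 < m+1 := by omega
      have hcomp1 : SimplexCategory.δ (⟨r+1, by omega⟩ : Fin (m+3)) ≫
          SimplexCategory.σ (⟨i, him⟩ : Fin (m+2)) =
          SimplexCategory.σ (⟨i, hi1⟩ : Fin (m+1)) ≫ SimplexCategory.δ (⟨r, hrm⟩ : Fin (m+2)) := by
        rw [SimplexCategory.δ_comp_σ_of_gt' (by simp only [Fin.lt_def, Fin.val_succ]; omega)]
        rfl
      have hcomp2 : SimplexCategory.σ (⟨r, hrm⟩ : Fin (m+2)) ≫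
          SimplexCategory.σ (⟨i, hi1⟩ : Fin (m+1)) =
          SimplexCategory.σ (⟨i, him⟩ : Fin (m+2)) ≫ SimplexCategory.σ (⟨r-1, hr1⟩ : Fin (m+1)) := by
        have h5 : (Fin.succ ⟨r-1, hr1⟩ : Fin (m+2)) = ⟨r, hrm⟩ := Fin.ext (by simp; omega)
        rw [← h5]
        exact (SimplexCategory.σ_comp_σ (i := ⟨i, hi1⟩) (j := ⟨r-1, hr1⟩)
          (by simp only [Fin.le_def]; omega)).symm
      have e0 : (C.map (SimplexCategory.σ (⟨i, hi1⟩ : Fin (m+1)))).f q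
            (x' ⟨r, hrm⟩ - (C.map (SimplexCategory.σ ⟨r, hrm⟩)).f q (ccrfY C q m x' r)) = 0 := by
        rw [map_sub, sub_eq_zero]
        calc (C.map (SimplexCategory.σ (⟨i, hi1⟩ : Fin (m+1)))).f q (x' ⟨r, hrm⟩)
            = (C.map (SimplexCategory.σ (⟨r-1, hr1⟩ : Fin (m+1)))).f q (x' ⟨i, him⟩) :=
              hx' i r hir2 hrm hi1 hr1 him
          _ = (C.map (SimplexCategory.σ (⟨r-1, hr1⟩ : Fin (m+1)))).f q
                ((C.map (SimplexCategory.σ (⟨i, him⟩ : Fin (m+2)))).f q (ccrfY C q m x' r)) := by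
              rw [ih (by omega) i hir2 him]
          _ = (C.map (SimplexCategory.σ (⟨i, him⟩ : Fin (m+2)) ≫
                SimplexCategory.σ (⟨r-1, hr1⟩ : Fin (m+1)))).f q (ccrfY C q m x' r) :=
              ccrf_mapmap C q _ _ _
          _ = (C.map (SimplexCategory.σ (⟨r, hrm⟩ : Fin (m+2)) ≫
                SimplexCategory.σ (⟨i, hi1⟩ : Fin (m+1)))).f q (ccrfY C q m x' r) := by
              rw [hcomp2]
          _ = (C.map (SimplexCategory.σ (⟨i, hi1⟩ : Fin (m+1)))).f q
                ((C.map (SimplexCategory.σ (⟨r, hrm⟩ : Fin (m+2)))).f q (ccrfY C q m x' r)) :=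
              (ccrf_mapmap C q _ _ _).symm
      rw [ih (by omega) i hir2 him, ccrf_mapmap, hcomp1, ← ccrf_mapmap, e0, map_zero, add_zero]

theorem cosimplicial_chain_complex_reedy_fibrant
    (C : CosimplicialObject (ChainComplex (ModuleCat ℝ) ℕ)) (n : ℕ) (q : ℕ) (hq : 0 < q)
    (x : ∀ (k : ℕ), k < n → (k = n - 1 ∨ k = n - 2) →
      ∀ (σ : (⦋n⦌ : SimplexCategory) ⟶ ⦋k⦌), Function.Surjective σ.toOrderHom →
        (C.obj ⦋k⦌).X q)
    (compat : ∀ (k l : ℕ) (hk : k < n) (hk' : k = n - 1 ∨ k = n - 2)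
      (hl : l < n) (hl' : l = n - 1 ∨ l = n - 2)
      (σ : (⦋n⦌ : SimplexCategory) ⟶ ⦋k⦌) (hσ : Function.Surjective σ.toOrderHom)
      (τ : (⦋k⦌ : SimplexCategory) ⟶ ⦋l⦌) (hτ : Function.Surjective τ.toOrderHom)
      (hστ : Function.Surjective (σ ≫ τ).toOrderHom),
      x l hl hl' (σ ≫ τ) hστ = (C.map τ).f q (x k hk hk' σ hσ)) :
    ∃ y : (C.obj ⦋n⦌).X q, ∀ (k : ℕ) (hk : k < n) (hk' : k = n - 1 ∨ k = n - 2)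
      (σ : (⦋n⦌ : SimplexCategory) ⟶ ⦋k⦌) (hσ : Function.Surjective σ.toOrderHom),
      x k hk hk' σ hσ = (C.map σ).f q y := by
  have σsurj : ∀ {a : ℕ} (i : Fin (a+1)),
      Function.Surjective (SimplexCategory.σ i).toOrderHom :=
    fun i => SimplexCategory.epi_iff_surjective.mp inferInstance
  rcases n with _ | _ | m
  · exact ⟨0, fun k hk => absurd hk (Nat.not_lt_zero k)⟩
  · -- n = 1
    refine ⟨(C.map (SimplexCategory.δ 0)).f q
      (x 0 Nat.one_pos (Or.inl rfl) (SimplexCategory.σ 0) (σsurj 0)), ?_⟩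
    intro k hk hk' σ hσ
    obtain rfl : k = 0 := by omega
    haveI : Epi σ := SimplexCategory.epi_iff_surjective.mpr hσ
    obtain ⟨i, rfl⟩ := SimplexCategory.eq_σ_of_epi σ
    obtain rfl : i = 0 := Fin.ext (by omega)
    rw [ccrf_mapmap]
    have hid : SimplexCategory.δ (0 : Fin 2) ≫ SimplexCategory.σ (0 : Fin 1) = 𝟙 _ :=
      SimplexCategory.δ_comp_σ_self' rfl
    rw [hid, C.map_id, HomologicalComplex.id_f]
    rfl
  · -- n = m + 2
    have hm1 : m + 1 < m + 2 := by omega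
    set x' : Fin (m+2) → ((C.obj ⦋m+1⦌).X q) :=
      fun i => x (m+1) hm1 (Or.inl rfl) (SimplexCategory.σ i) (σsurj i) with hx'def
    have hx' : ∀ (i r : ℕ) (_ : i < r) (hr : r < m+2) (hi1 : i < m+1) (hr1 : r-1 < m+1)
        (him : i < m+2),
        (C.map (SimplexCategory.σ (⟨i, hi1⟩ : Fin (m+1)))).f q (x' ⟨r, hr⟩) =
        (C.map (SimplexCategory.σ (⟨r-1, hr1⟩ : Fin (m+1)))).f q (x' ⟨i, him⟩) := by
      intro i r hir hr hi1 hr1 him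
      have hcomp2 : SimplexCategory.σ (⟨r, hr⟩ : Fin (m+2)) ≫
          SimplexCategory.σ (⟨i, hi1⟩ : Fin (m+1)) =
          SimplexCategory.σ (⟨i, him⟩ : Fin (m+2)) ≫ SimplexCategory.σ (⟨r-1, hr1⟩ : Fin (m+1)) := by
        have h5 : (Fin.succ ⟨r-1, hr1⟩ : Fin (m+2)) = ⟨r, hr⟩ := Fin.ext (by simp; omega)
        rw [← h5]
        exact (SimplexCategory.σ_comp_σ (i := ⟨i, hi1⟩) (j := ⟨r-1, hr1⟩)
          (by simp only [Fin.le_def]; omega)).symm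
      have hs1 : Function.Surjective (SimplexCategory.σ (⟨r, hr⟩ : Fin (m+2)) ≫
          SimplexCategory.σ (⟨i, hi1⟩ : Fin (m+1))).toOrderHom := by
        rw [SimplexCategory.comp_toOrderHom, OrderHom.comp_coe]
        exact Function.Surjective.comp (σsurj _) (σsurj _)
      have hs2 : Function.Surjective (SimplexCategory.σ (⟨i, him⟩ : Fin (m+2)) ≫
          SimplexCategory.σ (⟨r-1, hr1⟩ : Fin (m+1))).toOrderHom := by
        rw [SimplexCategory.comp_toOrderHom, OrderHom.comp_coe]
        exact Function.Surjective.comp (σsurj _) (σsurj _)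
      have h1 := compat (m+1) m hm1 (Or.inl rfl) (by omega) (Or.inr rfl)
        (SimplexCategory.σ ⟨r, hr⟩) (σsurj _) (SimplexCategory.σ ⟨i, hi1⟩) (σsurj _) hs1
      have h2 := compat (m+1) m hm1 (Or.inl rfl) (by omega) (Or.inr rfl)
        (SimplexCategory.σ ⟨i, him⟩) (σsurj _) (SimplexCategory.σ ⟨r-1, hr1⟩) (σsurj _) hs2
      have hxeq : x m (by omega) (Or.inr rfl)
            (SimplexCategory.σ (⟨r, hr⟩ : Fin (m+2)) ≫ SimplexCategory.σ ⟨i, hi1⟩) hs1 =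
          x m (by omega) (Or.inr rfl)
            (SimplexCategory.σ (⟨i, him⟩ : Fin (m+2)) ≫ SimplexCategory.σ ⟨r-1, hr1⟩) hs2 := by
        congr 1
      exact h1.symm.trans (hxeq.trans h2)
    refine ⟨ccrfY C q m x' (m+2), ?_⟩
    intro k hk hk' σg hσ
    have key := ccrfY_spec C q m x' hx'
    obtain rfl | rfl : m + 1 = k ∨ m = k := by omega
    · haveI : Epi σg := SimplexCategory.epi_iff_surjective.mpr hσ
      obtain ⟨i, rfl⟩ := SimplexCategory.eq_σ_of_epi σg
      exact (key (m+2) le_rfl i.val i.isLt i.isLt).symm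
    · have hni : ¬ Function.Injective σg.toOrderHom := by
        intro hinj
        have := Fintype.card_le_of_injective _ hinj
        simp only [Fintype.card_fin, SimplexCategory.len_mk] at this
        omega
      obtain ⟨i, θ, rfl⟩ := SimplexCategory.eq_σ_comp_of_not_injective σg hni
      have hθ : Function.Surjective θ.toOrderHom := by
        have h := hσ
        rw [SimplexCategory.comp_toOrderHom, OrderHom.comp_coe] at h
        exact Function.Surjective.of_comp h
      have h3 := compat (m+1) m hm1 (Or.inl rfl) (by omega) (Or.inr rfl)
        (SimplexCategory.σ i) (σsurj i) θ hθ hσ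
      calc x m hk hk' (SimplexCategory.σ i ≫ θ) hσ
          = (C.map θ).f q (x' i) := h3
        _ = (C.map θ).f q ((C.map (SimplexCategory.σ i)).f q (ccrfY C q m x' (m+2))) :=
            congrArg _ (key (m+2) le_rfl i.val i.isLt i.isLt).symm
        _ = (C.map (SimplexCategory.σ i ≫ θ)).f q (ccrfY C q m x' (m+2)) :=
            ccrf_mapmap C q _ _ _
end
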